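/- Let (Y_1,…,Y_{n+1}) be an irreducible Σ_q-family on a complex Hilbert space H with Y_{n+1}≠0. Then Y_{n+1} is injective, i.e., ker(Y_{n+1}) = {0}. -/

import Mathlib

open ContinuousLinearMap

noncomputable section

abbrev lpH (n : ℕ) : Type := lp (fun _ : Fin n → ℕ => ℂ) 2

def basisE {n : ℕ} (k : Fin n → ℕ) : lpH n := lp.single 2 k 1

/-- A `Σ_q`-family: relations (R1)-(R5). Index `i : Fin (n+1)` corresponds to `Y_{i+1}`. -/
def IsSigmaQFamily (q : ℝ) {n : ℕ} {H : Type*} [NormedAddCommGroup H]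
    [InnerProductSpace ℂ H] [CompleteSpace H]
    (Y : Fin (n + 1) → H →L[ℂ] H) : Prop :=
  (∀ i j : Fin (n + 1), j < i → ¬((i : ℕ) = n ∧ (j : ℕ) + 1 = n) →
      Y i * Y j = ((q : ℂ))⁻¹ • (Y j * Y i) ∧
      adjoint (Y i) * Y j = ((q : ℂ))⁻¹ • (Y j * adjoint (Y i))) ∧
  (∀ j : Fin (n + 1), (j : ℕ) + 1 = n →
      Y (Fin.last n) * Y j = (((q : ℂ))⁻¹ ^ 2) • (Y j * Y (Fin.last n)) ∧
      adjoint (Y (Fin.last n)) * Y j = (((q : ℂ))⁻¹ ^ 2) • (Y j * adjoint (Y (Fin.last n)))) ∧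
  (∀ i : Fin (n + 1), (i : ℕ) + 1 ≠ n →
      Y i * adjoint (Y i) - adjoint (Y i) * Y i
        = ((1 - q ^ 2 : ℝ) : ℂ) • ∑ k ∈ Finset.Ioi i, adjoint (Y k) * Y k) ∧
  (∀ i : Fin (n + 1), (i : ℕ) + 1 = n →
      Y i * adjoint (Y i) - adjoint (Y i) * Y i
        = ((1 - q ^ 4 : ℝ) : ℂ) • (adjoint (Y (Fin.last n)) * Y (Fin.last n))) ∧
  (∑ i, adjoint (Y i) * Y i = 1)

/-- The representation `π_λ` on `ℓ²(ℕⁿ)`, described by its action on the canonical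
orthonormal basis. Index `i : Fin n` (via `castSucc`) corresponds to `Y_{i+1}`,
and `Fin.last n` corresponds to `Y_{n+1}`. -/
def IsPiRep (q : ℝ) {n : ℕ} (lam : ℂ) (Y : Fin (n + 1) → lpH n →L[ℂ] lpH n) : Prop :=
  (∀ i : Fin n, (i : ℕ) + 1 < n → ∀ k : Fin n → ℕ,
      Y i.castSucc (basisE k)
        = ((q ^ (∑ j ∈ Finset.Iio i, k j) * Real.sqrt (1 - q ^ (2 * k i)) : ℝ) : ℂ)
            • basisE (Function.update k i (k i - 1))) ∧
  (∀ i : Fin n, (i : ℕ) + 1 = n → ∀ k : Fin n → ℕ,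
      Y i.castSucc (basisE k)
        = ((q ^ (∑ j ∈ Finset.Iio i, k j) * Real.sqrt (1 - q ^ (4 * k i)) : ℝ) : ℂ)
            • basisE (Function.update k i (k i - 1))) ∧
  (∀ k : Fin n → ℕ,
      Y (Fin.last n) (basisE k)
        = (lam * (q : ℂ) ^ (∑ j : Fin n, if (j : ℕ) + 1 = n then 2 * k j else k j))
            • basisE k)

/-- Irreducibility: the only closed invariant subspaces are `⊥` and `⊤`. -/
def IsIrreducibleFamily {n : ℕ} {H : Type*} [NormedAddCommGroup H]
    [InnerProductSpace ℂ H] [CompleteSpace H]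
    (Y : Fin (n + 1) → H →L[ℂ] H) : Prop :=
  ∀ V : Submodule ℂ H, IsClosed (V : Set H) →
    (∀ i : Fin (n + 1), ∀ v ∈ V, Y i v ∈ V ∧ adjoint (Y i) v ∈ V) →
    V = ⊥ ∨ V = ⊤

/-- Lemma 5(i) of the paper: in an irreducible `Σ_q`-family with `Y_{n+1} ≠ 0`,
the operator `Y_{n+1}` is injective. -/
theorem last_injective (q : ℝ) (hq0 : 0 < q) (hq1 : q < 1) (n : ℕ) (hn : 1 ≤ n)
    {H : Type*} [NormedAddCommGroup H] [InnerProductSpace ℂ H] [CompleteSpace H]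
    (Y : Fin (n + 1) → H →L[ℂ] H) (hY : IsSigmaQFamily q Y)
    (hirr : IsIrreducibleFamily Y) (hne : Y (Fin.last n) ≠ 0) :
    LinearMap.ker (Y (Fin.last n) : H →ₗ[ℂ] H) = ⊥ := by
  set A := Y (Fin.last n) with hA
  have hqC : (q : ℂ) ≠ 0 := by
    exact_mod_cast Complex.ofReal_ne_zero.mpr (ne_of_gt hq0)
  -- normality of A from R3 at i = last
  have hnormal : A * adjoint A = adjoint A * A := by
    have h := hY.2.2.1 (Fin.last n) (by simp)
    rw [show Finset.Ioi (Fin.last n) = (∅ : Finset (Fin (n+1))) by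
      ext x
      simp only [Finset.mem_Ioi, Finset.notMem_empty, iff_false, not_lt]
      exact Fin.le_last x] at h
    simpa [sub_eq_zero] using h
  have hinv : ∀ i : Fin (n + 1), ∀ v ∈ LinearMap.ker (A : H →ₗ[ℂ] H),
      Y i v ∈ LinearMap.ker (A : H →ₗ[ℂ] H) ∧ adjoint (Y i) v ∈ LinearMap.ker (A : H →ₗ[ℂ] H) := by
    intro i v hv
    rw [LinearMap.mem_ker, ContinuousLinearMap.coe_coe] at hv
    by_cases hi : i = Fin.last n
    · subst hi
      refine ⟨?_, ?_⟩
      · rw [LinearMap.mem_ker, ContinuousLinearMap.coe_coe, ← hA, hv, map_zero]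
      · rw [LinearMap.mem_ker, ContinuousLinearMap.coe_coe, ← hA]
        have h := congrFun (congrArg DFunLike.coe hnormal) v
        simp only [mul_apply_eq_comp] at h
        rw [h, hv, map_zero]
    · have hlt : i < Fin.last n := lt_of_le_of_ne (Fin.le_last i) hi
      obtain ⟨c, hc, h1, h2⟩ : ∃ c : ℂ, c ≠ 0 ∧ A * Y i = c • (Y i * A) ∧
          adjoint A * Y i = c • (Y i * adjoint A) := by
        by_cases hcase : (i : ℕ) + 1 = n
        · obtain ⟨h1, h2⟩ := hY.2.1 i hcase
          exact ⟨((q : ℂ))⁻¹ ^ 2, pow_ne_zero _ (inv_ne_zero hqC), h1, h2⟩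
        · obtain ⟨h1, h2⟩ := hY.1 (Fin.last n) i hlt (fun h => hcase h.2)
          exact ⟨((q : ℂ))⁻¹, inv_ne_zero hqC, h1, h2⟩
      refine ⟨?_, ?_⟩
      · rw [LinearMap.mem_ker, ContinuousLinearMap.coe_coe]
        have h := congrFun (congrArg DFunLike.coe h1) v
        simp only [mul_apply_eq_comp, smul_apply] at h
        rw [h, hv, map_zero, smul_zero]
      · rw [LinearMap.mem_ker, ContinuousLinearMap.coe_coe]
        -- take adjoints in h2 : adjoint A * Y i = c • (Y i * adjoint A)
        have h2' : adjoint (Y i) * A = (starRingEnd ℂ c) • (A * adjoint (Y i)) := by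
          have := congrArg ContinuousLinearMap.adjoint h2
          rw [map_smulₛₗ] at this
          simpa [ContinuousLinearMap.adjoint_comp, adjoint_adjoint, mul_def] using this
        have h := congrFun (congrArg DFunLike.coe h2') v
        simp only [mul_apply_eq_comp, smul_apply] at h
        rw [hv, map_zero] at h
        have hc' : (starRingEnd ℂ) c ≠ 0 := by
          simpa using hc
        have := h.symm
        rcases smul_eq_zero.mp this with h' | h'
        · exact absurd h' hc'
        · exact h'
  rcases hirr (LinearMap.ker (A : H →ₗ[ℂ] H)) (ContinuousLinearMap.isClosed_ker A) hinv with h | h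
  · exact h
  · exact absurd (ContinuousLinearMap.ext fun v => by
      have hv : v ∈ LinearMap.ker (A : H →ₗ[ℂ] H) := h ▸ Submodule.mem_top
      simpa using hv) hne
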